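/- Let R be a commutative ring, G a group, V an R-module with an R-linear G-action, and k, l ∈ ℕ. The canonical R-linear isomorphism ⨂_{a ∈ Fin k} (⨂_{b ∈ Fin l} V) ≅ ⨂_{(a,b) ∈ Fin k × Fin l} V is equivariant for the group (G ≀ Σ_l) ≀ Σ_k, where it acts on the left by the iterated wreath tensor-power action (with G ≀ Σ_l acting on each inner factor ⨂_{b ∈ Fin l} V) and on the right by restricting the wreath tensor-power action of G ≀ Σ(Fin k × Fin l) along the homomorphism Θ. (This is the paper's Lemma that the isomorphism (E^{⊠ l})^{⊠ k} ≅ E^{⊠ kl} is a map of (Σ_n ≀ Σ_l) ≀ Σ_k-objects, specialized to a point.) -/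

import Mathlib

open Equiv TensorProduct PiTensorProduct DirectSum

/-- The action of `Perm I` on `I → G` by `(σ • g) i = g (σ⁻¹ i)`. -/
def permAut (G : Type*) [Group G] (I : Type*) : Equiv.Perm I →* MulAut (I → G) where
  toFun σ :=
    { toFun := fun g => g ∘ σ.symm
      invFun := fun g => g ∘ σ
      left_inv := fun g => by funext i; simp
      right_inv := fun g => by funext i; simp
      map_mul' := fun g h => rfl }
  map_one' := by ext g i; rfl
  map_mul' := fun σ τ => by ext g i; rfl

/-- The wreath product `G ≀ Σ(I)`. -/
abbrev Wreath (G : Type*) [Group G] (I : Type*) :=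
  (I → G) ⋊[permAut G I] Equiv.Perm I

/-- The wreath tensor-power representation of `G ≀ Σ(I)` on `⨂ (i : I), V`:
the base `I → G` acts factorwise and `Perm I` permutes the tensor factors. -/
noncomputable def wreathRep (R : Type*) [CommRing R] {G : Type*} [Group G] (I : Type*)
    {V : Type*} [AddCommGroup V] [Module R V] (ρ : Representation R G V) :
    Representation R (Wreath G I) (⨂[R] _i : I, V) where
  toFun w :=
    (PiTensorProduct.map fun i => ρ (w.left i)).comp
      (PiTensorProduct.reindex R (fun _ : I => V) w.right).toLinearMap
  map_one' := by
    ext v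
    simp [Equiv.Perm.one_def]
  map_mul' := fun w₁ w₂ => by
    ext v
    simp [permAut, SemidirectProduct.mul_left, SemidirectProduct.mul_right,
      Equiv.Perm.mul_apply, Equiv.Perm.inv_def, Equiv.Perm.mul_def]

section Ind

variable (k : Type*) [CommRing k] {H G : Type*} [Group H] [Group G] (f : H →* G)
  (V : Type*) [AddCommGroup V] [Module k V] (ρ : Representation k H V)

/-- The submodule of relations defining the balanced tensor product
`MonoidAlgebra k G ⊗[MonoidAlgebra k H] V`. -/
noncomputable def indRel : Submodule k (MonoidAlgebra k G ⊗[k] V) :=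
  Submodule.span k {x | ∃ (a : MonoidAlgebra k G) (h : H) (v : V),
    x = (a * MonoidAlgebra.of k G (f h)) ⊗ₜ[k] v - a ⊗ₜ[k] (ρ h v)}

/-- The induced representation `Ind_H^G V = MonoidAlgebra k G ⊗_{MonoidAlgebra k H} V`,
realized as the quotient of `MonoidAlgebra k G ⊗[k] V` by the balancing relations. -/
abbrev Ind : Type _ := (MonoidAlgebra k G ⊗[k] V) ⧸ indRel k f V ρ

theorem indRel_le_comap (g : G) :
    indRel k f V ρ ≤ (indRel k f V ρ).comap
      (LinearMap.rTensor V (LinearMap.mulLeft k (MonoidAlgebra.of k G g))) := by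
  rw [indRel, Submodule.span_le]
  rintro x ⟨a, h, v, rfl⟩
  simp only [SetLike.mem_coe, Submodule.mem_comap, map_sub, LinearMap.rTensor_tmul,
    LinearMap.mulLeft_apply]
  rw [← mul_assoc]
  exact Submodule.subset_span ⟨MonoidAlgebra.of k G g * a, h, v, rfl⟩

/-- The `G`-action on `Ind_H^G V` by left multiplication on the first factor. -/
noncomputable def indRep : Representation k G (Ind k f V ρ) where
  toFun g := Submodule.mapQ _ _
      (LinearMap.rTensor V (LinearMap.mulLeft k (MonoidAlgebra.of k G g)))
      (indRel_le_comap k f V ρ g)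
  map_one' := by
    apply LinearMap.ext
    intro x
    induction x using Submodule.Quotient.induction_on with
    | _ y =>
      simp [Submodule.mapQ_apply, ← MonoidAlgebra.one_def, LinearMap.mulLeft_one]
  map_mul' := fun g₁ g₂ => by
    apply LinearMap.ext
    intro x
    induction x using Submodule.Quotient.induction_on with
    | _ y =>
      simp only [Submodule.mapQ_apply, _root_.map_mul, LinearMap.mulLeft_mul,
        LinearMap.rTensor_comp, LinearMap.comp_apply, Module.End.mul_apply]

end Ind

/-- The homomorphism `Θ : (G ≀ Σ_l) ≀ Σ_k → G ≀ Σ(Fin k × Fin l)`, sending `(w, σ)`,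
where `w a = (g_a, τ_a)`, to `(g', ρ)` with `g' (a, b) = g_a b` and
`ρ (a, b) = (σ a, τ_{σ a} b)`. -/
def Theta (G : Type*) [Group G] (k l : ℕ) :
    Wreath (Wreath G (Fin l)) (Fin k) →* Wreath G (Fin k × Fin l) where
  toFun w :=
    ⟨fun p => (w.left p.1).left p.2,
      { toFun := fun p => (w.right p.1, (w.left (w.right p.1)).right p.2)
        invFun := fun p => (w.right⁻¹ p.1, (w.left p.1).right⁻¹ p.2)
        left_inv := fun p => by simp
        right_inv := fun p => by simp }⟩
  map_one' := by
    ext p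
    · simp
    · simp
    · simp
  map_mul' := fun w₁ w₂ => by
    ext p
    all_goals
      simp only [SemidirectProduct.mul_left, SemidirectProduct.mul_right]
      simp [permAut, Equiv.Perm.mul_apply, Equiv.Perm.inv_def]


section Aux

variable (R : Type*) [CommRing R] (V : Type*) [AddCommGroup V] [Module R V]

theorem aux_wreathRep_tprod {G : Type*} [Group G] (I : Type*)
    (ρ : Representation R G V) (w : Wreath G I) (f : I → V) :
    wreathRep R I ρ w (PiTensorProduct.tprod R f) =
      PiTensorProduct.tprod R fun i => ρ (w.left i) (f (w.right⁻¹ i)) := by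
  simp [wreathRep, Equiv.Perm.inv_def]

theorem aux_span (k l : ℕ) (x : ⨂[R] _a : Fin k, ⨂[R] _b : Fin l, V) :
    x ∈ Submodule.span R {y : ⨂[R] _a : Fin k, ⨂[R] _b : Fin l, V |
      ∃ v : Fin k → Fin l → V,
        y = PiTensorProduct.tprod R fun a => PiTensorProduct.tprod R fun b => v a b} := by
  induction x using PiTensorProduct.induction_on with
  | smul_tprod r f =>
    refine Submodule.smul_mem _ _ ?_
    have hf : ∀ a, f a ∈ Submodule.span R
        (Set.range (PiTensorProduct.tprod R (s := fun _ : Fin l => V))) := by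
      intro a; rw [PiTensorProduct.span_tprod_eq_top]; trivial
    choose n c gs hgs using fun a => Submodule.mem_span_set'.mp (hf a)
    choose gf hgf using fun a i => Set.mem_range.mp (gs a i).2
    set C : Fin k → ℕ → R := fun a j => if h : j < n a then c a ⟨j, h⟩ else 0 with hC
    set W : Fin k → ℕ → Fin l → V := fun a j =>
      if h : j < n a then gf a ⟨j, h⟩ else fun _ => 0 with hW
    have hfa : f = fun a => ∑ j ∈ Finset.range (n a),
        C a j • PiTensorProduct.tprod R (W a j) := by
      funext a
      rw [← Fin.sum_univ_eq_sum_range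
        (fun j => C a j • PiTensorProduct.tprod R (W a j)) (n a), ← hgs a]
      refine Finset.sum_congr rfl fun i _ => ?_
      simp only [hC, hW, i.isLt, dif_pos, Fin.eta, hgf]
    rw [hfa, MultilinearMap.map_sum_finset]
    refine Submodule.sum_mem _ fun r _ => ?_
    rw [MultilinearMap.map_smul_univ]
    exact Submodule.smul_mem _ _
      (Submodule.subset_span ⟨fun a b => W a (r a) b, rfl⟩)
  | add x y hx hy => exact Submodule.add_mem _ hx hy

theorem aux_flatten (l : ℕ) : ∀ k : ℕ,
    ∃ Φ : (⨂[R] _a : Fin k, ⨂[R] _b : Fin l, V) ≃ₗ[R] ⨂[R] _p : Fin k × Fin l, V,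
      ∀ v : Fin k → Fin l → V,
        Φ (PiTensorProduct.tprod R fun a => PiTensorProduct.tprod R fun b => v a b) =
          PiTensorProduct.tprod R fun p : Fin k × Fin l => v p.1 p.2
  | 0 => by
    refine ⟨(PiTensorProduct.isEmptyEquiv (Fin 0)).trans
      (PiTensorProduct.isEmptyEquiv (Fin 0 × Fin l)).symm, fun v => ?_⟩
    rw [LinearEquiv.trans_apply, PiTensorProduct.isEmptyEquiv_apply_tprod,
      LinearEquiv.symm_apply_eq, PiTensorProduct.isEmptyEquiv_apply_tprod]
  | (k + 1) => by
    obtain ⟨Φk, hΦk⟩ := aux_flatten l k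
    let e1 : Fin (k + 1) ≃ Fin 1 ⊕ Fin k :=
      (finCongr (Nat.add_comm k 1)).trans finSumFinEquiv.symm
    let eP : (Fin l ⊕ Fin k × Fin l) ≃ Fin (k + 1) × Fin l :=
      { toFun := Sum.elim (fun b => (0, b)) fun p => (p.1.succ, p.2)
        invFun := fun p => Fin.cases (Sum.inl p.2) (fun a => Sum.inr (a, p.2)) p.1
        left_inv := by rintro (b | ⟨a, b⟩) <;> simp
        right_inv := by
          rintro ⟨a, b⟩
          induction a using Fin.cases <;> simp }
    have h0 : ∀ i : Fin 1, e1.symm (Sum.inl i) = 0 := by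
      intro i
      apply Fin.ext
      simp [e1]
    have hs : ∀ a : Fin k, e1.symm (Sum.inr a) = a.succ := by
      intro a
      apply Fin.ext
      simp [e1, Nat.add_comm]
    refine ⟨(PiTensorProduct.reindex R (fun _ => ⨂[R] _b : Fin l, V) e1).trans <|
      (PiTensorProduct.tmulEquiv R (⨂[R] _b : Fin l, V)).symm.trans <|
      (TensorProduct.congr (PiTensorProduct.subsingletonEquiv (0 : Fin 1)) Φk).trans <|
      (PiTensorProduct.tmulEquiv R V).trans (PiTensorProduct.reindex R (fun _ => V) eP),
      fun v => ?_⟩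
    simp only [LinearEquiv.trans_apply, PiTensorProduct.reindex_tprod,
      PiTensorProduct.tmulEquiv_symm_apply, TensorProduct.congr_tmul,
      PiTensorProduct.subsingletonEquiv_apply_tprod, hΦk,
      PiTensorProduct.tmulEquiv_apply]
    refine congrArg _ (funext fun p => ?_)
    obtain ⟨a, b⟩ := p
    induction a using Fin.cases with
    | zero => simp [eP, h0]
    | succ a => simp [eP, hs]

end Aux

theorem statement8 (R : Type*) [CommRing R] (G : Type*) [Group G]
    (V : Type*) [AddCommGroup V] [Module R V] (ρ : Representation R G V) (k l : ℕ) :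
    ∃ Φ : (⨂[R] _a : Fin k, ⨂[R] _b : Fin l, V) ≃ₗ[R] ⨂[R] _p : Fin k × Fin l, V,
      (∀ v : Fin k → Fin l → V,
        Φ (PiTensorProduct.tprod R fun a => PiTensorProduct.tprod R fun b => v a b) =
          PiTensorProduct.tprod R fun p : Fin k × Fin l => v p.1 p.2) ∧
      ∀ (w : Wreath (Wreath G (Fin l)) (Fin k)) (x : ⨂[R] _a : Fin k, ⨂[R] _b : Fin l, V),
        Φ (wreathRep R (Fin k) (wreathRep R (Fin l) ρ) w x) =
          wreathRep R (Fin k × Fin l) ρ (Theta G k l w) (Φ x) := by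
  obtain ⟨Φ, hΦ⟩ := aux_flatten R V l k
  refine ⟨Φ, hΦ, fun w x => ?_⟩
  induction aux_span R V k l x using Submodule.span_induction with
  | mem y hy =>
    obtain ⟨v, rfl⟩ := hy
    simp only [aux_wreathRep_tprod, hΦ]
    simp [Theta, Equiv.Perm.inv_def]
  | zero => simp
  | add a b _ _ ha hb => simp [ha, hb]
  | smul r a _ ha => simp [ha]
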